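/- Let σ_W > 0, σ > 0, and let p > 1 be a real number with 1 + (2−p)·p·σ_W²/σ² > 0. Writing φ_s(u) = (2π s²)^{−1/2} exp(−u²/(2s²)) for the centered Gaussian density with standard deviation s, one has ∫_ℝ ∫_ℝ φ_{σ_W}(w) · φ_σ(x − w)^p · φ_{√(σ_W² + σ²)}(x)^{1−p} dw dx = ( (1 + σ_W²/σ²)^p / (1 + (2−p)·p·σ_W²/σ²) )^{1/2}. -/

import Mathlib

open Real MeasureTheory

lemma integral_exp_quad (a b : ℝ) (ha : 0 < a) :
    ∫ w : ℝ, Real.exp (-a * w ^ 2 + b * w)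
      = Real.sqrt (π / a) * Real.exp (b ^ 2 / (4 * a)) := by
  have h : ∀ w : ℝ, -a * w ^ 2 + b * w = -a * (w - b / (2 * a)) ^ 2 + b ^ 2 / (4 * a) := by
    intro w; field_simp; ring
  simp_rw [h, Real.exp_add, integral_mul_const]
  rw [integral_sub_right_eq_self (fun w => Real.exp (-a * w ^ 2)) (b / (2 * a)),
    integral_gaussian]

lemma rearr (A Bp Cq eA e2 e3 E1 E2 : ℝ) (h : eA * (e2 * e3) = E1 * E2) :
    A * eA * (Bp * e2) * (Cq * e3) = (A * Bp * Cq * E1) * E2 := by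
  calc A * eA * (Bp * e2) * (Cq * e3) = (A * Bp * Cq) * (eA * (e2 * e3)) := by ring
    _ = (A * Bp * Cq) * (E1 * E2) := by rw [h]
    _ = (A * Bp * Cq * E1) * E2 := by ring

lemma sq_rpow (x : ℝ) (hx : 0 ≤ x) (p : ℝ) : (x ^ p) ^ 2 = (x ^ 2) ^ p := by
  rw [← Real.rpow_natCast (x ^ p) 2, ← Real.rpow_mul hx, mul_comm,
    Real.rpow_mul hx, Real.rpow_natCast]

/-- The centered Gaussian density with standard deviation `s`. -/
noncomputable def gaussianPdf (s u : ℝ) : ℝ :=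
  (Real.sqrt (2 * Real.pi * s ^ 2))⁻¹ * Real.exp (-u ^ 2 / (2 * s ^ 2))

/-- Closed form for `(p−1)·ℋ_p(W,X) + 1` in the Gaussian-prior Gaussian-noise model:
`∫∫ φ_{σ_W}(w) φ_σ(x−w)^p φ_{√(σ_W²+σ²)}(x)^{1−p} dw dx
  = ((1+σ_W²/σ²)^p / (1+(2−p)p σ_W²/σ²))^{1/2}`. -/
theorem gaussian_hellinger_closed_form
    (σW σ : ℝ) (hσW : 0 < σW) (hσ : 0 < σ)
    (p : ℝ) (hp : 1 < p) (hden : 0 < 1 + (2 - p) * p * σW ^ 2 / σ ^ 2) :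
    ∫ x : ℝ, ∫ w : ℝ,
        gaussianPdf σW w * gaussianPdf σ (x - w) ^ p *
          gaussianPdf (Real.sqrt (σW ^ 2 + σ ^ 2)) x ^ (1 - p)
      = ((1 + σW ^ 2 / σ ^ 2) ^ p / (1 + (2 - p) * p * σW ^ 2 / σ ^ 2)) ^ ((1 : ℝ) / 2) := by
  have ht : (0:ℝ) < σ ^ 2 := by positivity
  have hu : (0:ℝ) < σW ^ 2 := by positivity
  have hs2 : (0:ℝ) < σW ^ 2 + σ ^ 2 := by positivity
  have hp0 : (0:ℝ) < p := lt_trans one_pos hp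
  have htpu : (0:ℝ) < σ ^ 2 + p * σW ^ 2 := by positivity
  have hq : (0:ℝ) < σ ^ 2 + (2 - p) * p * σW ^ 2 := by
    have h1 := mul_pos hden ht
    have h2 : (1 + (2 - p) * p * σW ^ 2 / σ ^ 2) * σ ^ 2
        = σ ^ 2 + (2 - p) * p * σW ^ 2 := by field_simp
    linarith [h2 ▸ h1]
  set α := (σ ^ 2 + p * σW ^ 2) / (2 * σW ^ 2 * σ ^ 2) with hα
  have hαpos : 0 < α := by rw [hα]; positivity
  set b := p / σ ^ 2 with hb
  set c := p / (2 * σ ^ 2) + (1 - p) / (2 * (σW ^ 2 + σ ^ 2)) with hc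
  set γ := (σ ^ 2 + (2 - p) * p * σW ^ 2) /
      (2 * (σW ^ 2 + σ ^ 2) * (σ ^ 2 + p * σW ^ 2)) with hγ
  have hγpos : 0 < γ := by rw [hγ]; positivity
  set K := (Real.sqrt (2 * π * σW ^ 2))⁻¹ * ((Real.sqrt (2 * π * σ ^ 2))⁻¹) ^ p *
      ((Real.sqrt (2 * π * (σW ^ 2 + σ ^ 2)))⁻¹) ^ (1 - p) with hK
  -- Step A: pointwise rewriting of the integrand
  have stepA : ∀ x w : ℝ,
      gaussianPdf σW w * gaussianPdf σ (x - w) ^ p *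
          gaussianPdf (Real.sqrt (σW ^ 2 + σ ^ 2)) x ^ (1 - p)
        = (K * Real.exp (-c * x ^ 2)) * Real.exp (-α * w ^ 2 + b * x * w) := by
    intro x w
    simp only [gaussianPdf, Real.sq_sqrt hs2.le]
    rw [Real.mul_rpow (by positivity) (Real.exp_pos _).le,
      Real.mul_rpow (by positivity) (Real.exp_pos _).le,
      ← Real.exp_mul, ← Real.exp_mul, hK]
    refine rearr _ _ _ _ _ _ _ _ ?_
    rw [← Real.exp_add, ← Real.exp_add, ← Real.exp_add]
    congr 1
    rw [hc, hα, hb]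
    field_simp
    ring
  simp_rw [stepA, integral_const_mul]
  have hinner : ∀ x : ℝ, ∫ w : ℝ, Real.exp (-α * w ^ 2 + b * x * w)
      = Real.sqrt (π / α) * Real.exp ((b * x) ^ 2 / (4 * α)) :=
    fun x => integral_exp_quad α (b * x) hαpos
  simp_rw [hinner]
  have houter : ∀ x : ℝ,
      K * Real.exp (-c * x ^ 2) * (Real.sqrt (π / α) * Real.exp ((b * x) ^ 2 / (4 * α)))
        = (K * Real.sqrt (π / α)) * Real.exp (-γ * x ^ 2) := by
    intro x
    rw [show K * Real.exp (-c * x ^ 2) *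
          (Real.sqrt (π / α) * Real.exp ((b * x) ^ 2 / (4 * α)))
        = (K * Real.sqrt (π / α)) *
          (Real.exp (-c * x ^ 2) * Real.exp ((b * x) ^ 2 / (4 * α))) from by ring,
      ← Real.exp_add]
    congr 2
    rw [hc, hα, hb, hγ]
    field_simp
    ring
  simp_rw [houter, integral_const_mul, integral_gaussian γ]
  -- Step C: algebra
  have hsq : (K * Real.sqrt (π / α) * Real.sqrt (π / γ)) ^ 2
      = (1 + σW ^ 2 / σ ^ 2) ^ p / (1 + (2 - p) * p * σW ^ 2 / σ ^ 2) := by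
    have hK2 : K ^ 2 = (2 * π * σW ^ 2)⁻¹ * ((2 * π * σ ^ 2)⁻¹) ^ p *
        ((2 * π * (σW ^ 2 + σ ^ 2))⁻¹) ^ (1 - p) := by
      rw [hK, mul_pow, mul_pow, sq_rpow _ (by positivity), sq_rpow _ (by positivity),
        inv_pow, inv_pow, inv_pow, Real.sq_sqrt (by positivity),
        Real.sq_sqrt (by positivity), Real.sq_sqrt (by positivity)]
    rw [mul_pow, mul_pow, Real.sq_sqrt (by positivity : (0:ℝ) ≤ π / α),
      Real.sq_sqrt (by positivity : (0:ℝ) ≤ π / γ), hK2]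
    have e1 : (((2 * π * (σW ^ 2 + σ ^ 2))⁻¹ : ℝ)) ^ (1 - p)
        = (2 * π * (σW ^ 2 + σ ^ 2))⁻¹ / ((2 * π * (σW ^ 2 + σ ^ 2))⁻¹) ^ p := by
      rw [Real.rpow_sub (by positivity), Real.rpow_one]
    have e2 : (((2 * π * σ ^ 2)⁻¹ : ℝ)) ^ p / ((2 * π * (σW ^ 2 + σ ^ 2))⁻¹) ^ p
        = (1 + σW ^ 2 / σ ^ 2) ^ p := by
      rw [← Real.div_rpow (by positivity) (by positivity)]
      congr 1
      rw [div_inv_eq_mul, inv_mul_eq_div]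
      field_simp
      ring
    rw [e1, ← e2, hα, hγ]
    have hY : (0:ℝ) < ((2 * π * (σW ^ 2 + σ ^ 2))⁻¹) ^ p := by positivity
    field_simp
  have hLnn : 0 ≤ K * Real.sqrt (π / α) * Real.sqrt (π / γ) := by
    rw [hK]; positivity
  calc K * Real.sqrt (π / α) * Real.sqrt (π / γ)
      = Real.sqrt ((K * Real.sqrt (π / α) * Real.sqrt (π / γ)) ^ 2) :=
        (Real.sqrt_sq hLnn).symm
    _ = Real.sqrt ((1 + σW ^ 2 / σ ^ 2) ^ p / (1 + (2 - p) * p * σW ^ 2 / σ ^ 2)) := by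
        rw [hsq]
    _ = ((1 + σW ^ 2 / σ ^ 2) ^ p / (1 + (2 - p) * p * σW ^ 2 / σ ^ 2)) ^ ((1:ℝ)/2) :=
        Real.sqrt_eq_rpow _
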